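/- arXiv:2402.13755 — 2 statements merged into one kernel-verified Lean document; each statement's English description precedes it below -/
import Mathlib

section
/- In the natural β-partition ℓ_β of a graph with arboricity α, the number of vertices with ℓ_β(v) > k is at most |V| · (2α/β)^k for every k ∈ ℕ (assuming β ≥ 1). In particular, if β ≥ (2+ε)α for ε > 0, the natural β-partition has at most O(log_{β/(2α)} n) nonempty finite layers and no vertex is assigned layer ∞. -/
open Classical

variable {V : Type*}

/-- `G` has arboricity at most `a`: every subgraph `H` with at least `2` vertices
satisfies `⌈|E(H)|/(|V(H)|-1)⌉ ≤ a`, i.e. `|E(H)| ≤ a * (|V(H)| - 1)`. -/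
def HasArboricity (G : SimpleGraph V) (a : ℕ) : Prop :=
  ∀ H : G.Subgraph, 2 ≤ H.verts.ncard → H.edgeSet.ncard ≤ a * (H.verts.ncard - 1)

/-- Vertices assigned a layer `≤ i` in the iterative construction of the
`S`-induced `β`-partition. -/
noncomputable def assignedUpTo (G : SimpleGraph V) (S : Set V) (β : ℕ) : ℕ → Set V
  | 0 => {v | v ∈ S ∧ (G.neighborSet v).ncard ≤ β}
  | (i+1) => assignedUpTo G S β i ∪
      {v | v ∈ S ∧ ((G.neighborSet v) \ assignedUpTo G S β i).ncard ≤ β}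

/-- The `S`-induced `β`-partition `σ_{S,β} : V → ℕ∞`. -/
noncomputable def indSigma (G : SimpleGraph V) (S : Set V) (β : ℕ) (v : V) : ℕ∞ :=
  if _h : ∃ i, v ∈ assignedUpTo G S β i then (sInf {i | v ∈ assignedUpTo G S β i} : ℕ) else ⊤

/-- Auxiliary definition of the dependency graph, by fuel on the layer. -/
noncomputable def depAux (G : SimpleGraph V) (σ : V → ℕ∞) : ℕ → V → Set V
  | 0, v => if σ v = 0 then {v} else ∅
  | (n+1), v => if σ v = ((n+1 : ℕ) : ℕ∞)
      then insert v (⋃ w ∈ {w | G.Adj v w ∧ σ w < σ v}, depAux G σ n w)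
      else depAux G σ n v

/-- The dependency graph `D(σ, v)`. -/
noncomputable def depGraph (G : SimpleGraph V) (σ : V → ℕ∞) (v : V) : Set V :=
  depAux G σ (σ v).toNat v

/-- A partial `β`-partition: every node with finite layer has at most `β`
neighbors in equal or higher layers. -/
def IsPartialBetaPartition (G : SimpleGraph V) (β : ℕ) (lam : V → ℕ∞) : Prop :=
  ∀ v, lam v ≠ ⊤ → {w | G.Adj v w ∧ lam v ≤ lam w}.ncard ≤ β

lemma handshake [Fintype V] (G : SimpleGraph V) (B : Set V) :
    ∑ v ∈ B.toFinset, (G.neighborSet v ∩ B).ncard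
      = 2 * ((⊤ : G.Subgraph).induce B).edgeSet.ncard := by
  classical
  set H : G.Subgraph := (⊤ : G.Subgraph).induce B with hH
  haveI : DecidableRel H.coe.Adj := Classical.decRel _
  have hdeg : ∀ v : ↥B, H.coe.degree v = (G.neighborSet ↑v ∩ B).ncard := by
    intro v
    have h1 : Subtype.val '' (H.coe.neighborSet v) = G.neighborSet ↑v ∩ B := by
      ext w
      simp only [Set.mem_image, SimpleGraph.Subgraph.coe_adj, SimpleGraph.mem_neighborSet,
        Set.mem_inter_iff, hH, SimpleGraph.Subgraph.induce_adj, SimpleGraph.Subgraph.top_adj]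
      constructor
      · rintro ⟨⟨w, hw⟩, ⟨_, hw', hadj⟩, rfl⟩
        exact ⟨hadj, hw⟩
      · rintro ⟨hadj, hw⟩
        exact ⟨⟨w, hw⟩, ⟨v.2, hw, hadj⟩, rfl⟩
    have h2 : (H.coe.neighborSet v).ncard = (G.neighborSet ↑v ∩ B).ncard := by
      rw [← h1, Set.ncard_image_of_injective _ Subtype.val_injective]
    rw [← h2, ← Nat.card_coe_set_eq, Nat.card_eq_fintype_card]
    exact (SimpleGraph.card_neighborSet_eq_degree H.coe v).symm
  have hsum : ∑ v ∈ B.toFinset, (G.neighborSet v ∩ B).ncard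
      = ∑ v : ↥B, H.coe.degree v := by
    rw [Finset.sum_subtype (p := fun x => x ∈ B) B.toFinset (fun x => Set.mem_toFinset)
      (fun v => (G.neighborSet v ∩ B).ncard)]
    exact Finset.sum_congr rfl fun v _ => (hdeg v).symm
  have h6 : ∑ v : ↥B, H.coe.degree v = 2 * H.coe.edgeFinset.card := by
    convert H.coe.sum_degrees_eq_twice_card_edges using 2 with v
    congr 1
    exacts [heq_of_eq (by congr 1), heq_of_eq (by funext v; congr 1; exact Subsingleton.elim _ _)]
  rw [hsum, h6]
  have h3 : Sym2.map (Subtype.val : ↥B → V) '' H.coe.edgeSet = H.edgeSet :=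
    SimpleGraph.Subgraph.image_coe_edgeSet_coe H
  have h4 : H.coe.edgeSet.ncard = H.edgeSet.ncard := by
    rw [← h3]
    exact (Set.ncard_image_of_injective _ (Sym2.map.injective Subtype.val_injective)).symm
  have h5 : H.coe.edgeFinset.card = H.coe.edgeSet.ncard := by
    rw [SimpleGraph.edgeFinset, Set.toFinset_card, ← Nat.card_eq_fintype_card,
      Nat.card_coe_set_eq]
  rw [h5, h4]

lemma key [Fintype V] (G : SimpleGraph V) {α β : ℕ} (hβ : 1 ≤ β) (hG : HasArboricity G α)
    (B : Set V) :
    β * {v | v ∈ B ∧ β < (G.neighborSet v ∩ B).ncard}.ncard ≤ 2 * α * B.ncard := by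
  classical
  set C := {v | v ∈ B ∧ β < (G.neighborSet v ∩ B).ncard} with hC
  rcases Set.eq_empty_or_nonempty C with h | h
  · simp [h]
  · -- B has at least 2 elements
    obtain ⟨v₀, hv₀⟩ := h
    have hBfin : B.Finite := Set.toFinite _
    have hB2 : 2 ≤ B.ncard := by
      have hsub : G.neighborSet v₀ ∩ B ⊆ B \ {v₀} := by
        rintro w ⟨hw1, hw2⟩
        exact ⟨hw2, fun hwv => G.irrefl (hwv ▸ hw1)⟩
      have h1 : (G.neighborSet v₀ ∩ B).ncard ≤ (B \ {v₀}).ncard :=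
        Set.ncard_le_ncard hsub hBfin.diff
      have h2 : (B \ {v₀}).ncard = B.ncard - 1 := Set.ncard_diff_singleton_of_mem hv₀.1
      have := hv₀.2
      omega
    set H : G.Subgraph := (⊤ : G.Subgraph).induce B with hH
    have hHv : H.verts = B := rfl
    have hE : H.edgeSet.ncard ≤ α * (B.ncard - 1) := by
      have := hG H (by rw [hHv]; exact hB2)
      rwa [hHv] at this
    have hCB : C.toFinset ⊆ B.toFinset := by
      rw [Set.toFinset_subset_toFinset]
      exact fun v hv => hv.1
    have hsum1 : (β + 1) * C.ncard ≤ ∑ v ∈ C.toFinset, (G.neighborSet v ∩ B).ncard := by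
      rw [Set.ncard_eq_toFinset_card', mul_comm]
      have h0 := Finset.card_nsmul_le_sum C.toFinset (fun v => (G.neighborSet v ∩ B).ncard)
        (β + 1) (fun v hv => by
          have := (Set.mem_toFinset.mp hv).2
          show β + 1 ≤ (G.neighborSet v ∩ B).ncard
          omega)
      simpa [smul_eq_mul] using h0
    have hsum2 : ∑ v ∈ C.toFinset, (G.neighborSet v ∩ B).ncard
        ≤ ∑ v ∈ B.toFinset, (G.neighborSet v ∩ B).ncard :=
      Finset.sum_le_sum_of_subset hCB
    have hhs := handshake G B
    calc β * C.ncard ≤ (β + 1) * C.ncard := Nat.mul_le_mul_right _ (Nat.le_succ β)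
      _ ≤ ∑ v ∈ B.toFinset, (G.neighborSet v ∩ B).ncard := le_trans hsum1 hsum2
      _ = 2 * H.edgeSet.ncard := hhs
      _ ≤ 2 * (α * (B.ncard - 1)) := Nat.mul_le_mul_left _ hE
      _ ≤ 2 * α * B.ncard := by
          rw [mul_assoc]
          exact Nat.mul_le_mul_left _ (Nat.mul_le_mul_left _ (Nat.sub_le _ _))

lemma compl_zero [Fintype V] (G : SimpleGraph V) (β : ℕ) :
    (assignedUpTo G Set.univ β 0)ᶜ
      = {v | v ∈ (Set.univ : Set V) ∧ β < (G.neighborSet v ∩ Set.univ).ncard} := by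
  ext v
  simp [assignedUpTo, not_le]

lemma compl_succ [Fintype V] (G : SimpleGraph V) (β : ℕ) (i : ℕ) :
    (assignedUpTo G Set.univ β (i+1))ᶜ
      = {v | v ∈ (assignedUpTo G Set.univ β i)ᶜ
          ∧ β < (G.neighborSet v ∩ (assignedUpTo G Set.univ β i)ᶜ).ncard} := by
  ext v
  simp only [assignedUpTo, Set.mem_compl_iff, Set.mem_union, Set.mem_setOf_eq, not_or, not_and,
    not_le, Set.mem_univ, true_and, Set.diff_eq]
  try tauto

lemma assignedUpTo_subset (G : SimpleGraph V) (S : Set V) (β : ℕ) {i j : ℕ} (h : i ≤ j) :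
    assignedUpTo G S β i ⊆ assignedUpTo G S β j := by
  induction j with
  | zero => rw [Nat.le_zero.mp h]
  | succ j ih =>
    rcases eq_or_lt_of_le h with rfl | h'
    · exact Set.Subset.rfl
    · exact (ih (Nat.lt_succ_iff.mp h')).trans Set.subset_union_left

lemma mem_assigned_iff (G : SimpleGraph V) (β : ℕ) (v : V) (k : ℕ) :
    indSigma G Set.univ β v ≤ (k : ℕ∞) ↔ v ∈ assignedUpTo G Set.univ β k := by
  constructor
  · intro h
    by_cases hex : ∃ i, v ∈ assignedUpTo G Set.univ β i
    · rw [indSigma, dif_pos hex, Nat.cast_le] at h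
      exact assignedUpTo_subset G _ β h (Nat.sInf_mem hex)
    · rw [indSigma, dif_neg hex] at h
      simp at h
  · intro h
    rw [indSigma, dif_pos ⟨k, h⟩]
    exact Nat.cast_le.mpr (Nat.sInf_le h)

lemma Abound [Fintype V] (G : SimpleGraph V) {α β : ℕ} (hβ : 1 ≤ β) (hG : HasArboricity G α)
    (k : ℕ) :
    (((assignedUpTo G Set.univ β k)ᶜ.ncard : ℝ))
      ≤ (Fintype.card V) * ((2 * α : ℝ) / β) ^ (k + 1) := by
  have hβ' : (0 : ℝ) < β := by exact_mod_cast hβ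
  have hr0 : (0 : ℝ) ≤ (2 * α : ℝ) / β := by positivity
  induction k with
  | zero =>
    have h := key G hβ hG (Set.univ : Set V)
    rw [← compl_zero G β] at h
    have h' : (β : ℝ) * (assignedUpTo G Set.univ β 0)ᶜ.ncard
        ≤ 2 * α * (Fintype.card V) := by
      have hcard : (Set.univ : Set V).ncard = Fintype.card V := by
        rw [Set.ncard_univ, Nat.card_eq_fintype_card]
      rw [hcard] at h
      exact_mod_cast h
    rw [pow_one, mul_comm, div_mul_eq_mul_div, le_div_iff₀ hβ']
    linarith
  | succ k ih =>
    have h := key G hβ hG ((assignedUpTo G Set.univ β k)ᶜ)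
    rw [← compl_succ G β k] at h
    have h' : (β : ℝ) * (assignedUpTo G Set.univ β (k+1))ᶜ.ncard
        ≤ 2 * α * (assignedUpTo G Set.univ β k)ᶜ.ncard := by exact_mod_cast h
    have h2 : ((assignedUpTo G Set.univ β (k+1))ᶜ.ncard : ℝ)
        ≤ (2 * α : ℝ) / β * (assignedUpTo G Set.univ β k)ᶜ.ncard := by
      rw [div_mul_eq_mul_div, le_div_iff₀ hβ']
      linarith
    calc ((assignedUpTo G Set.univ β (k+1))ᶜ.ncard : ℝ)
        ≤ (2 * α : ℝ) / β * (assignedUpTo G Set.univ β k)ᶜ.ncard := h2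
      _ ≤ (2 * α : ℝ) / β * ((Fintype.card V) * ((2 * α : ℝ) / β) ^ (k + 1)) := by
          exact mul_le_mul_of_nonneg_left ih hr0
      _ = (Fintype.card V) * ((2 * α : ℝ) / β) ^ (k + 1 + 1) := by ring

/-- In the natural `β`-partition `ℓ_β`, the number of vertices with
`ℓ_β(v) > k` is at most `|V|·(2α/β)^k`; moreover, if `β ≥ (2+ε)α` for some `ε > 0`,
no vertex has layer `∞` and the number of nonempty finite layers is at most
`log_{β/(2α)} n + 1` (which is `O(log_{β/(2α)} n)`). -/
theorem natural_partition_layers [Fintype V] (G : SimpleGraph V) (α β : ℕ)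
    (hβ : 1 ≤ β) (hG : HasArboricity G α) :
    (∀ k : ℕ,
      ({v : V | (k : ℕ∞) < indSigma G Set.univ β v}.ncard : ℝ)
        ≤ (Fintype.card V) * ((2 * α : ℝ) / β) ^ k) ∧
    (∀ ε : ℝ, 0 < ε → (2 + ε) * α ≤ (β : ℝ) →
      (∀ v : V, indSigma G Set.univ β v ≠ ⊤) ∧
      ({i : ℕ | ∃ v : V, indSigma G Set.univ β v = (i : ℕ∞)}.ncard : ℝ)
        ≤ Real.logb ((β : ℝ) / (2 * α)) (Fintype.card V) + 1) := by
  classical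
  have hβ' : (0 : ℝ) < β := by exact_mod_cast hβ
  have hr0 : (0 : ℝ) ≤ (2 * α : ℝ) / β := by positivity
  have hsetA : ∀ k : ℕ, {v : V | (k : ℕ∞) < indSigma G Set.univ β v}
      = (assignedUpTo G Set.univ β k)ᶜ := by
    intro k; ext v
    simp only [Set.mem_setOf_eq, Set.mem_compl_iff, ← mem_assigned_iff G β v k, not_le]
  have hncard_le : ∀ s : Set V, (s.ncard : ℝ) ≤ Fintype.card V := by
    intro s
    have := Set.ncard_le_ncard (Set.subset_univ s) Set.finite_univ
    rw [Set.ncard_univ, Nat.card_eq_fintype_card] at this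
    exact_mod_cast this
  have part1 : ∀ k : ℕ, ({v : V | (k : ℕ∞) < indSigma G Set.univ β v}.ncard : ℝ)
      ≤ (Fintype.card V) * ((2 * α : ℝ) / β) ^ k := by
    intro k
    rw [hsetA k]
    rcases le_or_gt 1 ((2 * α : ℝ) / β) with hr | hr
    · have h2 : (1 : ℝ) ≤ ((2 * α : ℝ) / β) ^ k := one_le_pow₀ hr
      have h3 : (Fintype.card V : ℝ) * 1 ≤ (Fintype.card V) * ((2 * α : ℝ) / β) ^ k :=
        mul_le_mul_of_nonneg_left h2 (Nat.cast_nonneg _)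
      calc ((assignedUpTo G Set.univ β k)ᶜ.ncard : ℝ) ≤ Fintype.card V := hncard_le _
        _ = (Fintype.card V) * 1 := by ring
        _ ≤ _ := h3
    · have h1 := Abound G hβ hG k
      have h2 : ((2 * α : ℝ) / β) ^ (k + 1) ≤ ((2 * α : ℝ) / β) ^ k :=
        pow_le_pow_of_le_one hr0 hr.le (Nat.le_succ k)
      exact h1.trans (mul_le_mul_of_nonneg_left h2 (Nat.cast_nonneg _))
  refine ⟨part1, ?_⟩
  intro ε hε hεβ
  by_cases hα : α = 0
  · subst hα
    have h := key G hβ hG (Set.univ : Set V)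
    rw [← compl_zero G β] at h
    have h0 : (assignedUpTo G Set.univ β 0)ᶜ = ∅ := by
      have hn : (assignedUpTo G Set.univ β 0)ᶜ.ncard = 0 := by
        have h' : β * (assignedUpTo G Set.univ β 0)ᶜ.ncard = 0 :=
          Nat.le_zero.mp (by simpa using h)
        rcases Nat.mul_eq_zero.mp h' with h'' | h''
        · omega
        · exact h''
      exact (Set.ncard_eq_zero (Set.toFinite _)).mp hn
    have hall : ∀ v : V, indSigma G Set.univ β v ≤ ((0 : ℕ) : ℕ∞) := by
      intro v
      rw [mem_assigned_iff]
      by_contra hc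
      have hv : v ∈ (assignedUpTo G Set.univ β 0)ᶜ := hc
      rw [h0] at hv
      exact hv
    constructor
    · intro v
      exact ne_top_of_le_ne_top (by simp) (hall v)
    · have hsub : {i : ℕ | ∃ v : V, indSigma G Set.univ β v = (i : ℕ∞)} ⊆ {0} := by
        rintro i ⟨v, hv⟩
        have h1 := hall v
        rw [hv] at h1
        have h2 : i ≤ 0 := Nat.cast_le.mp h1
        simpa using h2
      have hn : {i : ℕ | ∃ v : V, indSigma G Set.univ β v = (i : ℕ∞)}.ncard ≤ 1 := by
        have := Set.ncard_le_ncard hsub (Set.finite_singleton 0)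
        simpa using this
      have hb : Real.logb ((β : ℝ) / (2 * ((0:ℕ) : ℝ))) (Fintype.card V) = 0 := by
        norm_num [Real.logb]
      rw [hb]
      have : ({i : ℕ | ∃ v : V, indSigma G Set.univ β v = (i : ℕ∞)}.ncard : ℝ) ≤ 1 := by
        exact_mod_cast hn
      linarith
  · have hα1 : 1 ≤ α := Nat.one_le_iff_ne_zero.mpr hα
    have hαR : (1 : ℝ) ≤ α := by exact_mod_cast hα1
    have h2α : (0 : ℝ) < 2 * α := by linarith
    have hβR : (2 : ℝ) * α < β := by nlinarith
    have hr1 : (2 * α : ℝ) / β < 1 := by rw [div_lt_one hβ']; exact hβR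
    have hrpos : (0 : ℝ) < (2 * α : ℝ) / β := by positivity
    have hb1 : 1 < (β : ℝ) / (2 * α) := by rw [lt_div_iff₀ h2α]; linarith
    have hfin : ∀ v : V, indSigma G Set.univ β v ≠ ⊤ := by
      obtain ⟨k, hk⟩ := exists_pow_lt_of_lt_one
        (show (0 : ℝ) < 1 / ((Fintype.card V : ℝ) + 1) by positivity) hr1
      have hAk : ((assignedUpTo G Set.univ β k)ᶜ.ncard : ℝ) < 1 := by
        have h1 := Abound G hβ hG k
        have h2 : ((2 * α : ℝ) / β) ^ (k + 1) ≤ ((2 * α : ℝ) / β) ^ k :=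
          pow_le_pow_of_le_one hrpos.le hr1.le (Nat.le_succ k)
        have h3 : (Fintype.card V : ℝ) * ((2 * α : ℝ) / β) ^ k < 1 := by
          calc (Fintype.card V : ℝ) * ((2 * α : ℝ) / β) ^ k
              ≤ (Fintype.card V : ℝ) * (1 / ((Fintype.card V : ℝ) + 1)) :=
                mul_le_mul_of_nonneg_left hk.le (Nat.cast_nonneg _)
            _ < 1 := by
                rw [mul_one_div, div_lt_one (by positivity)]
                linarith
        calc ((assignedUpTo G Set.univ β k)ᶜ.ncard : ℝ)
            ≤ (Fintype.card V) * ((2 * α : ℝ) / β) ^ (k + 1) := h1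
          _ ≤ (Fintype.card V) * ((2 * α : ℝ) / β) ^ k :=
              mul_le_mul_of_nonneg_left h2 (Nat.cast_nonneg _)
          _ < 1 := h3
      have hA0 : (assignedUpTo G Set.univ β k)ᶜ = ∅ := by
        have h4 : (assignedUpTo G Set.univ β k)ᶜ.ncard = 0 := by
          have := hAk
          exact_mod_cast Nat.lt_one_iff.mp (by exact_mod_cast this)
        exact (Set.ncard_eq_zero (Set.toFinite _)).mp h4
      intro v
      have hvmem : v ∈ assignedUpTo G Set.univ β k := by
        by_contra hc
        have hv : v ∈ (assignedUpTo G Set.univ β k)ᶜ := hc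
        rw [hA0] at hv
        exact hv
      exact ne_top_of_le_ne_top (by simp) ((mem_assigned_iff G β v k).mpr hvmem)
    refine ⟨hfin, ?_⟩
    rcases Nat.eq_zero_or_pos (Fintype.card V) with hn0 | hn0
    · haveI := Fintype.card_eq_zero_iff.mp hn0
      have hS : {i : ℕ | ∃ v : V, indSigma G Set.univ β v = (i : ℕ∞)} = ∅ := by
        ext i
        simp only [Set.mem_setOf_eq, Set.mem_empty_iff_false, iff_false, not_exists]
        exact fun v => (IsEmpty.false v).elim
      rw [hS, hn0]
      simp [Real.logb_zero]
    · have hnR : (1 : ℝ) ≤ (Fintype.card V : ℝ) := by exact_mod_cast hn0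
      have hlogb0 : 0 ≤ Real.logb ((β : ℝ) / (2 * α)) (Fintype.card V) :=
        Real.logb_nonneg hb1 hnR
      set m := ⌊Real.logb ((β : ℝ) / (2 * α)) (Fintype.card V)⌋₊ with hm
      have hsub : {i : ℕ | ∃ v : V, indSigma G Set.univ β v = (i : ℕ∞)} ⊆ Set.Iic m := by
        rintro i ⟨v, hv⟩
        simp only [Set.mem_Iic]
        apply Nat.le_floor
        cases i with
        | zero => simpa using hlogb0
        | succ j =>
          have hvj : v ∉ assignedUpTo G Set.univ β j := by
            intro hc
            have h1 := (mem_assigned_iff G β v j).mpr hc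
            rw [hv] at h1
            have h2 : j + 1 ≤ j := Nat.cast_le.mp h1
            omega
          have h1 : 1 ≤ (assignedUpTo G Set.univ β j)ᶜ.ncard := by
            rw [Nat.one_le_iff_ne_zero]
            intro hc
            have h2 := (Set.ncard_eq_zero (Set.toFinite _)).mp hc
            have hv2 : v ∈ (assignedUpTo G Set.univ β j)ᶜ := hvj
            rw [h2] at hv2
            exact hv2
          have h2 : (1 : ℝ) ≤ (Fintype.card V) * ((2 * α : ℝ) / β) ^ (j + 1) :=
            le_trans (by exact_mod_cast h1) (Abound G hβ hG j)
          have hrpow : (0 : ℝ) < ((2 * α : ℝ) / β) ^ (j + 1) := pow_pos hrpos _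
          have h3 : ((β : ℝ) / (2 * α)) ^ (j + 1) ≤ (Fintype.card V : ℝ) := by
            have h4 := (div_le_iff₀ hrpow).mpr
              (by linarith : (1 : ℝ) ≤ (Fintype.card V : ℝ) * ((2 * α : ℝ) / β) ^ (j + 1))
            have h5 : (β : ℝ) / (2 * α) = ((2 * α : ℝ) / β)⁻¹ := by
              rw [inv_div]
            rw [h5, inv_pow]
            simpa [one_div] using h4
          have h6 : ((j + 1 : ℕ) : ℝ) ≤ Real.logb ((β : ℝ) / (2 * α)) (Fintype.card V) := by
            rw [Real.le_logb_iff_rpow_le hb1 (by linarith : (0 : ℝ) < (Fintype.card V : ℝ))]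
            rw [Real.rpow_natCast]
            exact_mod_cast h3
          exact_mod_cast h6
      have hcount : {i : ℕ | ∃ v : V, indSigma G Set.univ β v = (i : ℕ∞)}.ncard ≤ m + 1 := by
        have h5 := Set.ncard_le_ncard hsub (Set.finite_Iic m)
        have h6 : (Set.Iic m).ncard = m + 1 := by
          rw [← Finset.coe_Iic, Set.ncard_coe_finset, Nat.card_Iic]
        omega
      have h7 : (m : ℝ) ≤ Real.logb ((β : ℝ) / (2 * α)) (Fintype.card V) :=
        Nat.floor_le hlogb0
      have h8 : ({i : ℕ | ∃ v : V, indSigma G Set.univ β v = (i : ℕ∞)}.ncard : ℝ) ≤ m + 1 := by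
        exact_mod_cast hcount
      linarith
end

section
/- In the coin dropping game, if during a super-iteration with current set S_v the node v satisfies |D(ℓ_β, v)| ≤ x², ℓ_β(v) ≤ log_{β+1} x, and σ_{S_v,β}(v) > ℓ_β(v), then there exists a path v = w_0, w_1, ..., w_k in G with each w_i a neighbor of w_{i−1}, w_i ∈ D(ℓ_β, w_{i−1}), σ_{S_v,β}(w_i) > ℓ_β(w_i) for all i < k, k ≤ log_{β+1} x, and w_k ∉ S_v; consequently a new node of D(ℓ_β, v) \ S_v is discovered. -/
open Classical

variable {V : Type*}

section CoinGameHelpers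

lemma cg_assignedUpTo_mono (G : SimpleGraph V) (S : Set V) (β : ℕ) :
    Monotone (assignedUpTo G S β) :=
  monotone_nat_of_le_succ (fun _ => Set.subset_union_left)

lemma cg_indSigma_le_iff (G : SimpleGraph V) (S : Set V) (β : ℕ) (v : V) (i : ℕ) :
    indSigma G S β v ≤ (i : ℕ∞) ↔ v ∈ assignedUpTo G S β i := by
  unfold indSigma
  by_cases h : ∃ j, v ∈ assignedUpTo G S β j
  · rw [dif_pos h, Nat.cast_le]
    exact ⟨fun hle => cg_assignedUpTo_mono G S β hle (Nat.sInf_mem h), fun hm => Nat.sInf_le hm⟩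
  · rw [dif_neg h]
    simp only [top_le_iff]
    exact ⟨fun ht => absurd ht (by simp), fun hm => absurd ⟨i, hm⟩ h⟩

lemma cg_assignedUpTo_subset (G : SimpleGraph V) [Fintype V] {S T : Set V} (hST : S ⊆ T)
    (β : ℕ) : ∀ i, assignedUpTo G S β i ⊆ assignedUpTo G T β i := by
  intro i
  induction i with
  | zero => rintro v ⟨hvS, hd⟩; exact ⟨hST hvS, hd⟩
  | succ i ih =>
    rintro v (hv | ⟨hvS, hd⟩)
    · exact Or.inl (ih hv)
    · exact Or.inr ⟨hST hvS, le_trans (Set.ncard_le_ncard (Set.diff_subset_diff_right ih) (Set.toFinite _)) hd⟩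

lemma cg_key_step (G : SimpleGraph V) [Fintype V] (β : ℕ) (Sv : Set V) {v : V}
    (hv : v ∈ Sv) (hfin : indSigma G Set.univ β v ≠ ⊤)
    (hgt : indSigma G Set.univ β v < indSigma G Sv β v) :
    1 ≤ (indSigma G Set.univ β v).toNat ∧ ∃ w, G.Adj v w ∧
      indSigma G Set.univ β w < indSigma G Set.univ β v ∧
      indSigma G Set.univ β w < indSigma G Sv β w := by
  set ℓ := indSigma G Set.univ β with hℓ
  set σ := indSigma G Sv β with hσ
  obtain hvn : ℓ v = ((ℓ v).toNat : ℕ∞) := (ENat.coe_toNat hfin).symm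
  have hmem : v ∈ assignedUpTo G Set.univ β (ℓ v).toNat :=
    (cg_indSigma_le_iff G Set.univ β v _).mp hvn.le
  cases hn : (ℓ v).toNat with
  | zero =>
    rw [hn] at hmem
    have hd : (G.neighborSet v).ncard ≤ β := hmem.2
    have : σ v ≤ ((0 : ℕ) : ℕ∞) := (cg_indSigma_le_iff G Sv β v 0).mpr ⟨hv, hd⟩
    rw [hn] at hvn
    exact absurd (lt_of_lt_of_le hgt this) (by rw [hvn]; simp)
  | succ m =>
    refine ⟨by omega, ?_⟩
    rw [hn] at hmem hvn
    have h1 : v ∉ assignedUpTo G Set.univ β m := by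
      intro hc
      have : ℓ v ≤ (m : ℕ∞) := (cg_indSigma_le_iff G Set.univ β v m).mpr hc
      rw [hvn] at this
      exact absurd (Nat.cast_le.mp this) (by omega)
    have h2 : v ∉ assignedUpTo G Sv β (m+1) := by
      intro hc
      have : σ v ≤ ((m+1 : ℕ) : ℕ∞) := (cg_indSigma_le_iff G Sv β v (m+1)).mpr hc
      exact absurd (lt_of_lt_of_le hgt this) (by rw [hvn]; exact lt_irrefl _)
    have hcard1 : ((G.neighborSet v) \ assignedUpTo G Set.univ β m).ncard ≤ β := by
      rcases hmem with h | h
      · exact absurd h h1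
      · exact h.2
    have hcard2 : β < ((G.neighborSet v) \ assignedUpTo G Sv β m).ncard := by
      by_contra hc
      push_neg at hc
      exact h2 (Or.inr ⟨hv, hc⟩)
    have hns : ¬ ((G.neighborSet v) \ assignedUpTo G Sv β m ⊆
        (G.neighborSet v) \ assignedUpTo G Set.univ β m) := by
      intro hc
      exact absurd (Set.ncard_le_ncard hc (Set.toFinite _)) (by omega)
    obtain ⟨w, hw1, hw2⟩ := Set.not_subset.mp hns
    have hwadj : G.Adj v w := hw1.1
    have hwuniv : w ∈ assignedUpTo G Set.univ β m := by
      by_contra hc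
      exact hw2 ⟨hw1.1, hc⟩
    have hwℓ : ℓ w ≤ (m : ℕ∞) := (cg_indSigma_le_iff G Set.univ β w m).mpr hwuniv
    have hwσ : ¬ σ w ≤ (m : ℕ∞) := fun hc => hw1.2 ((cg_indSigma_le_iff G Sv β w m).mp hc)
    refine ⟨w, hwadj, ?_, lt_of_le_of_lt hwℓ (not_le.mp hwσ)⟩
    rw [hvn]
    exact lt_of_le_of_lt hwℓ (by exact_mod_cast Nat.lt_succ_self m)

lemma cg_depAux_eq_depGraph (G : SimpleGraph V) (σ : V → ℕ∞) :
    ∀ (n : ℕ) (w : V), σ w ≤ (n : ℕ∞) → depAux G σ n w = depGraph G σ w := by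
  intro n
  induction n with
  | zero =>
    intro w h
    have h0 : σ w = 0 := le_antisymm (by exact_mod_cast h) zero_le
    rw [depGraph, h0]
    rfl
  | succ n ih =>
    intro w h
    by_cases he : σ w = ((n+1 : ℕ) : ℕ∞)
    · rw [depGraph, he, ENat.toNat_coe]
    · have hle : σ w ≤ (n : ℕ∞) := by
        have hne : σ w ≠ ⊤ := ne_top_of_le_ne_top (by exact_mod_cast ENat.coe_ne_top (n+1)) h
        lift σ w to ℕ using hne with m hm
        exact_mod_cast Nat.lt_succ_iff.mp (lt_of_le_of_ne (by exact_mod_cast h) (fun hc => he (by exact_mod_cast hc)))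
      rw [show depAux G σ (n+1) w = depAux G σ n w from if_neg he, ih w hle]

lemma cg_self_mem_depGraph (G : SimpleGraph V) (σ : V → ℕ∞) (w : V) (h : σ w ≠ ⊤) :
    w ∈ depGraph G σ w := by
  rw [depGraph]
  generalize hn : (σ w).toNat = n
  have hw : σ w = (n : ℕ∞) := by rw [← hn, ENat.coe_toNat h]
  cases n with
  | zero => rw [depAux, if_pos (by exact_mod_cast hw)]; exact rfl
  | succ n => rw [depAux, if_pos hw]; exact Set.mem_insert _ _

lemma cg_depGraph_subset_of_adj (G : SimpleGraph V) (σ : V → ℕ∞) {v w : V}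
    (hadj : G.Adj v w) (hlt : σ w < σ v) (hfin : σ v ≠ ⊤) :
    depGraph G σ w ⊆ depGraph G σ v := by
  have hv : σ v = (((σ v).toNat : ℕ) : ℕ∞) := (ENat.coe_toNat hfin).symm
  cases hn : (σ v).toNat with
  | zero =>
    rw [hn] at hv
    rw [hv] at hlt
    exact absurd hlt (by simp)
  | succ m =>
    rw [hn] at hv
    have hwle : σ w ≤ (m : ℕ∞) := by
      rw [hv] at hlt
      have hne : σ w ≠ ⊤ := ne_top_of_lt hlt
      lift σ w to ℕ using hne with j hj
      exact_mod_cast Nat.lt_succ_iff.mp (by exact_mod_cast hlt)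
    have : depGraph G σ v = depAux G σ (m+1) v := by rw [depGraph, hn]
    rw [this, depAux, if_pos hv]
    refine subset_trans ?_ (Set.subset_insert _ _)
    rw [← cg_depAux_eq_depGraph G σ m w hwle]
    exact Set.subset_biUnion_of_mem (u := fun w => depAux G σ m w) ⟨hadj, hlt⟩

lemma cg_toNat_lt_toNat {a b : ℕ∞} (hb : b ≠ ⊤) (h : a < b) : a.toNat < b.toNat := by
  have ha := ne_top_of_lt h
  lift a to ℕ using ha; lift b to ℕ using hb
  simpa using (by exact_mod_cast h : a < b)

lemma cg_main_aux [Fintype V] (G : SimpleGraph V) (β : ℕ) (Sv : Set V) :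
    ∀ (n : ℕ) (v : V), v ∈ Sv → (indSigma G Set.univ β v).toNat ≤ n →
    indSigma G Set.univ β v ≠ ⊤ →
    indSigma G Set.univ β v < indSigma G Sv β v →
    ∃ (k : ℕ) (p : Fin (k + 1) → V),
      p 0 = v ∧ k ≤ (indSigma G Set.univ β v).toNat ∧
      (∀ i : Fin k, G.Adj (p i.castSucc) (p i.succ) ∧
        p i.succ ∈ depGraph G (indSigma G Set.univ β) (p i.castSucc)) ∧
      (∀ i : Fin k,
        indSigma G Set.univ β (p i.castSucc) < indSigma G Sv β (p i.castSucc)) ∧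
      p (Fin.last k) ∉ Sv ∧
      p (Fin.last k) ∈ depGraph G (indSigma G Set.univ β) v := by
  intro n
  induction n with
  | zero =>
    intro v hv hle hfin hgt
    obtain ⟨hpos, -⟩ := cg_key_step G β Sv hv hfin hgt
    omega
  | succ n ih =>
    intro v hv hle hfin hgt
    obtain ⟨hpos, w, hadj, hlt, hwσ⟩ := cg_key_step G β Sv hv hfin hgt
    have hwfin : indSigma G Set.univ β w ≠ ⊤ := ne_top_of_lt hlt
    have hwtn : (indSigma G Set.univ β w).toNat < (indSigma G Set.univ β v).toNat :=
      cg_toNat_lt_toNat hfin hlt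
    have hwsub : depGraph G (indSigma G Set.univ β) w ⊆ depGraph G (indSigma G Set.univ β) v :=
      cg_depGraph_subset_of_adj G _ hadj hlt hfin
    have hwmem : w ∈ depGraph G (indSigma G Set.univ β) v :=
      hwsub (cg_self_mem_depGraph G _ w hwfin)
    by_cases hwS : w ∈ Sv
    · obtain ⟨k, p, hp0, hpk, hadjp, hσp, hlast, hlastdep⟩ := ih w hwS (by omega) hwfin hwσ
      refine ⟨k+1, Fin.cons v p, Fin.cons_zero _ _, by omega, ?_, ?_, ?_, ?_⟩
      · intro i
        refine Fin.cases ?_ ?_ i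
        · constructor
          · simpa [Fin.cons_succ, hp0] using hadj
          · simpa [Fin.cons_succ, hp0] using hwmem
        · intro j
          constructor
          · simpa [← Fin.succ_castSucc, Fin.cons_succ] using (hadjp j).1
          · simpa [← Fin.succ_castSucc, Fin.cons_succ] using (hadjp j).2
      · intro i
        refine Fin.cases ?_ ?_ i
        · simpa using hgt
        · intro j
          simpa [← Fin.succ_castSucc, Fin.cons_succ] using hσp j
      · rw [show Fin.last (k+1) = Fin.succ (Fin.last k) from (Fin.succ_last k).symm,
          Fin.cons_succ]
        exact hlast
      · rw [show Fin.last (k+1) = Fin.succ (Fin.last k) from (Fin.succ_last k).symm,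
          Fin.cons_succ]
        exact hwsub hlastdep
    · refine ⟨1, ![v, w], rfl, hpos, ?_, ?_, ?_, ?_⟩
      · intro i
        fin_cases i
        exact ⟨by simpa using hadj, by simpa using hwmem⟩
      · intro i
        fin_cases i
        simpa using hgt
      · simpa using hwS
      · simpa using hwmem

end CoinGameHelpers

/-- Measure of progress in the coin dropping game: if
`|D(ℓ_β, v)| ≤ x²`, `ℓ_β(v) ≤ log_{β+1} x`, and `σ_{S_v,β}(v) > ℓ_β(v)`, then there
is a path `v = w_0, …, w_k` with `w_i ∈ D(ℓ_β, w_{i-1})`,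
`σ_{S_v,β}(w_i) > ℓ_β(w_i)` for `i < k`, `k ≤ log_{β+1} x`, and `w_k ∉ S_v`;
consequently a new node of `D(ℓ_β, v) \ S_v` is discovered. -/
theorem coin_game_progress [Fintype V] (G : SimpleGraph V) (β x : ℕ)
    (hβ : 1 ≤ β) (hx : 1 ≤ x) (Sv : Set V) (v : V) (hv : v ∈ Sv)
    (hD : ((depGraph G (indSigma G Set.univ β) v).ncard : ℝ) ≤ (x : ℝ) ^ 2)
    (hfin : indSigma G Set.univ β v ≠ ⊤)
    (hlow : ((indSigma G Set.univ β v).toNat : ℝ) ≤ Real.log x / Real.log ((β : ℝ) + 1))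
    (hgt : indSigma G Set.univ β v < indSigma G Sv β v) :
    ∃ (k : ℕ) (p : Fin (k + 1) → V),
      p 0 = v ∧
      ((k : ℝ) ≤ Real.log x / Real.log ((β : ℝ) + 1)) ∧
      (∀ i : Fin k, G.Adj (p i.castSucc) (p i.succ) ∧
        p i.succ ∈ depGraph G (indSigma G Set.univ β) (p i.castSucc)) ∧
      (∀ i : Fin k,
        indSigma G Set.univ β (p i.castSucc) < indSigma G Sv β (p i.castSucc)) ∧
      p (Fin.last k) ∉ Sv ∧
      p (Fin.last k) ∈ depGraph G (indSigma G Set.univ β) v := by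
  obtain ⟨k, p, hp0, hpk, hadjp, hσp, hlast, hlastdep⟩ :=
    cg_main_aux G β Sv (indSigma G Set.univ β v).toNat v hv le_rfl hfin hgt
  refine ⟨k, p, hp0, ?_, hadjp, hσp, hlast, hlastdep⟩
  calc (k : ℝ) ≤ ((indSigma G Set.univ β v).toNat : ℝ) := by exact_mod_cast hpk
    _ ≤ _ := hlow
end
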